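/- Let F be the T-character of the length-k one-leg fixed point: F = \sum_{j=-k}^{\infty} t_1^j (formally, t_1^{-k}/(1-t_1)). Then F \cdot (1-t_1)(1-t_2)(1-t_3) = t_1^{-k}(1-t_2)(1-t_3), and the generating function of descendent weights satisfies \sum_{i \geq -2} W^P_{(1),\emptyset,\emptyset}(\tau_i) z^{2+i} = (1 - e^{z s_2})(1 - e^{z s_3}) \exp(-z s_1 q \frac{d}{dq}) [(1+q)^{(s_2+s_3)/s_1}], where \tau_i inserts ch_{2+i} of t_1^{-k}(1-t_2)(1-t_3) into the weight of Q^k. -/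

import Mathlib

/-!
STATEMENT 15: with `F = t₁^{-k}/(1-t₁)` the T-character of the length-`k` one-leg
fixed point, we have `F·(1-t₁)(1-t₂)(1-t₃) = t₁^{-k}(1-t₂)(1-t₃)`, and the generating
function of descendent weights satisfies
`∑_{i≥-2} W^P_{(1),∅,∅}(τ_i) z^{2+i}
   = (1-e^{zs₂})(1-e^{zs₃}) exp(-z s₁ q d/dq)[(1+q)^{(s₂+s₃)/s₁}]`,
where `ch_l` of a T-representation of character `∑ n_w t^w` is the `z^l` coefficient of
`∑ n_w e^{z⟨w,s⟩}` and the descendent weight is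
`w_{τ_i}(Q^k) = w(Q^k)·ch_{2+i}(t₁^{-k}(1-t₂)(1-t₃))`.
Both sides are formal power series in `z` whose coefficients are formal power series
in `q` over `ℚ(s₁,s₂,s₃)`.
-/

noncomputable section

open MvPolynomial PowerSeries

/-- The field `ℚ(s₁,s₂,s₃)` (also used as `ℚ(t₁,t₂,t₃)` in the character identity). -/
abbrev K := FractionRing (MvPolynomial (Fin 3) ℚ)

/-- The equivariant parameters (resp. torus characters). -/
def s (i : Fin 3) : K := algebraMap (MvPolynomial (Fin 3) ℚ) K (X i)

/-- The generalized binomial coefficient `binom(x,k)`. -/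
def rchoose (x : K) (k : ℕ) : K :=
  (∏ i ∈ Finset.range k, (x - (i : K))) / (Nat.factorial k : K)

/-- The exponential `e^{zc}` as a power series in `z`. -/
def expS (c : K) : PowerSeries K :=
  PowerSeries.mk fun l => c ^ l / (Nat.factorial l : K)

/-- The operator `q d/dq` on power series in `q`. -/
def qddq (G : PowerSeries K) : PowerSeries K :=
  PowerSeries.mk fun k => (k : K) * PowerSeries.coeff (R := K) k G

/-- `(1+q)^{(s₂+s₃)/s₁} = ∑_k binom((s₂+s₃)/s₁, k) q^k`, the one-leg vertex series. -/
def GF : PowerSeries K := PowerSeries.mk (rchoose ((s 1 + s 2) / s 0))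

/-- The Chern character series `ch(t₁^{-k}(1-t₂)(1-t₃)) = e^{-kzs₁}(1-e^{zs₂})(1-e^{zs₃})`
as a power series in `z`. -/
def chSeries (k : ℕ) : PowerSeries K :=
  (1 - expS (s 1)) * (1 - expS (s 2)) * expS (-(k : K) * s 0)

/-- The left side `∑_{i≥-2} W^P_{(1),∅,∅}(τ_i) z^{2+i}`:
the `z^l q^k` coefficient is `w(Q^k)·ch_l(t₁^{-k}(1-t₂)(1-t₃))`. -/
def LHS : PowerSeries (PowerSeries K) :=
  PowerSeries.mk fun l => PowerSeries.mk fun k =>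
    rchoose ((s 1 + s 2) / s 0) k * PowerSeries.coeff (R := K) l (chSeries k)

/-- The right side `(1-e^{zs₂})(1-e^{zs₃})·exp(-z s₁ q d/dq)[(1+q)^{(s₂+s₃)/s₁}]`. -/
def RHS : PowerSeries (PowerSeries K) :=
  (PowerSeries.map (PowerSeries.C (R := K)) ((1 - expS (s 1)) * (1 - expS (s 2)))) *
    PowerSeries.mk fun l => ((-(s 0)) ^ l / (Nat.factorial l : K)) • (qddq^[l] GF)


lemma coeff_qddq_iter (n k : ℕ) (G : PowerSeries K) :
    PowerSeries.coeff (R := K) k (qddq^[n] G) = (k : K) ^ n * PowerSeries.coeff (R := K) k G := by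
  induction n with
  | zero => simp
  | succ n ih =>
      rw [Function.iterate_succ_apply', qddq, PowerSeries.coeff_mk, ih, pow_succ]
      ring

lemma one_sub_s0_ne : (1 : K) - s 0 ≠ 0 := by
  have h : ((1 : MvPolynomial (Fin 3) ℚ) - MvPolynomial.X 0) ≠ 0 := by
    intro h
    have := congrArg (MvPolynomial.constantCoeff) h
    simp at this
  intro h0
  apply h
  apply IsFractionRing.injective (MvPolynomial (Fin 3) ℚ) K
  simpa [s, map_sub] using h0

lemma coeff_expS (n : ℕ) (c : K) :
    PowerSeries.coeff (R := K) n (expS c) = c ^ n / (Nat.factorial n : K) := by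
  rw [expS, PowerSeries.coeff_mk]

lemma coeff_chSeries (l k : ℕ) :
    PowerSeries.coeff (R := K) l (chSeries k) =
      ∑ p ∈ Finset.HasAntidiagonal.antidiagonal l,
        PowerSeries.coeff (R := K) p.1 ((1 - expS (s 1)) * (1 - expS (s 2))) *
          ((-(k : K) * s 0) ^ p.2 / (Nat.factorial p.2 : K)) := by
  rw [chSeries, PowerSeries.coeff_mul]
  exact Finset.sum_congr rfl fun p _ => by rw [coeff_expS]

theorem descendent_vertex_one_leg :
    (∀ k : ℕ,
      (s 0 ^ (-(k : ℤ)) / (1 - s 0)) * ((1 - s 0) * (1 - s 1) * (1 - s 2)) =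
        s 0 ^ (-(k : ℤ)) * ((1 - s 1) * (1 - s 2))) ∧
    LHS = RHS := by
  constructor
  · intro k
    have h := one_sub_s0_ne
    rw [div_mul_eq_mul_div, mul_assoc (1 - s 0), mul_div_assoc,
      mul_div_cancel_left₀ _ h]
  · ext l k
    rw [LHS, RHS, PowerSeries.coeff_mk, PowerSeries.coeff_mk, coeff_chSeries,
      PowerSeries.coeff_mul, map_sum, Finset.mul_sum]
    apply Finset.sum_congr rfl
    intro p _
    rw [PowerSeries.coeff_map, PowerSeries.coeff_mk, PowerSeries.coeff_C_mul,
      PowerSeries.coeff_smul, coeff_qddq_iter, GF, PowerSeries.coeff_mk]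
    simp only [smul_eq_mul]
    ring

end
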